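/- arXiv:1706.08572 — 3 statements merged into one kernel-verified Lean document; each statement's English description precedes it below -/
import Mathlib

section
/- Let 1 ≤ n < m be integers and let y(t) = Σ_{i≥m} a_i t^i ∈ ℂ[[t]] with a_m ≠ 0. Suppose there exists i > m with a_i ≠ 0 and let λ be the least such index. Then ord_t( m·y(t)·n·t^{n−1} − n·t^n·y'(t) ) = λ + n − 1; equivalently, the contact of the 1-form m·y dx − n·x dy with the branch parametrized by (t^n, y(t)) equals λ + n (this identifies Zariski's λ invariant as υ_Γ(m y dx − n x dy) − n). -/
/-!
STATEMENT 2: Zariski's λ invariant as the contact with `m·y dx − n·x dy`.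
If `y(t) = Σ_{i≥m} a_i t^i` with `a_m ≠ 0`, `1 ≤ n < m`, and `λ` is the least
index `> m` with nonzero coefficient, then
`ord_t(m·y(t)·n·t^{n−1} − n·t^n·y'(t)) = λ + n − 1`.
-/

open PowerSeries

theorem zariski_lambda_contact
    (n m lam : ℕ) (hn : 1 ≤ n) (hnm : n < m)
    (y : PowerSeries ℂ)
    (hlow : ∀ i < m, PowerSeries.coeff i y = 0)
    (hm : PowerSeries.coeff m y ≠ 0)
    (hlam : m < lam ∧ PowerSeries.coeff lam y ≠ 0)
    (hleast : ∀ i, m < i → PowerSeries.coeff i y ≠ 0 → lam ≤ i) :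
    PowerSeries.order
        (PowerSeries.C (m : ℂ) * y * (PowerSeries.C (n : ℂ) * PowerSeries.X ^ (n - 1)) -
          PowerSeries.C (n : ℂ) * PowerSeries.X ^ n * PowerSeries.derivativeFun y)
      = ((lam + n - 1 : ℕ) : ℕ∞) := by
  set F := PowerSeries.C (m : ℂ) * y * (PowerSeries.C (n : ℂ) * PowerSeries.X ^ (n - 1)) -
          PowerSeries.C (n : ℂ) * PowerSeries.X ^ n * PowerSeries.derivativeFun y with hF
  have hFeq : F = PowerSeries.C ((m : ℂ) * n) * (y * PowerSeries.X ^ (n - 1)) -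
      PowerSeries.C (n : ℂ) * (PowerSeries.derivativeFun y * PowerSeries.X ^ n) := by
    rw [hF, map_mul]; ring
  have key : ∀ k : ℕ, PowerSeries.coeff k F =
      (if n - 1 ≤ k then (m : ℂ) * n * PowerSeries.coeff (k - (n - 1)) y else 0) -
      (if n ≤ k then (n : ℂ) * (PowerSeries.coeff (k - n + 1) y * (k - n + 1 : ℕ)) else 0) := by
    intro k
    rw [hFeq, map_sub, coeff_C_mul, coeff_C_mul, coeff_mul_X_pow', coeff_mul_X_pow',
      (show PowerSeries.coeff (k - n) (PowerSeries.derivativeFun y) = _ from coeff_derivative y (k - n))]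
    split_ifs <;> push_cast <;> ring
  rw [order_eq_nat]
  constructor
  · rw [key]
    have h1 : n - 1 ≤ lam + n - 1 := by omega
    have h2 : n ≤ lam + n - 1 := by omega
    have h3 : lam + n - 1 - (n - 1) = lam := by omega
    have h4 : lam + n - 1 - n + 1 = lam := by omega
    rw [if_pos h1, if_pos h2, h3, h4]
    have : (m : ℂ) * n * PowerSeries.coeff lam y -
        (n : ℂ) * (PowerSeries.coeff lam y * (lam : ℕ)) =
        (n : ℂ) * ((m : ℂ) - lam) * PowerSeries.coeff lam y := by ring
    rw [this]
    have hne : (n : ℂ) ≠ 0 := Nat.cast_ne_zero.2 (by omega)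
    have hml : (m : ℂ) - lam ≠ 0 := by
      have : (m : ℂ) ≠ (lam : ℂ) := by
        exact_mod_cast Nat.ne_of_lt hlam.1
      exact sub_ne_zero_of_ne this
    exact mul_ne_zero (mul_ne_zero hne hml) hlam.2
  · intro i hi
    rw [key]
    by_cases h1 : n - 1 ≤ i
    · rw [if_pos h1]
      set j := i - (n - 1) with hj
      have hjl : j < lam := by omega
      by_cases h2 : n ≤ i
      · rw [if_pos h2]
        have h4 : i - n + 1 = j := by omega
        rw [h4]
        by_cases hjm : j = m
        · subst hjm
          ring
        · have : PowerSeries.coeff j y = 0 := by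
            rcases lt_or_gt_of_ne hjm with h | h
            · exact hlow j h
            · by_contra hne
              exact absurd (hleast j h hne) (by omega)
          rw [this]; ring
      · -- i = n - 1, so j = 0 < m, coeff 0 = 0
        rw [if_neg h2]
        have hj0 : j = 0 := by omega
        rw [hj0, hlow 0 (by omega)]
        ring
    · rw [if_neg h1, if_neg (by omega)]
      ring
end

section
/- Let 2 ≤ n < m < λ be integers with n not dividing m. Let y(t) = Σ_{i≥m} a_i t^i ∈ ℂ[[t]] with a_m ≠ 0, a_i = 0 for all m < i < λ, and a_λ ≠ 0, and set φ(t) = (t^n, y(t)). Let S' = {p·n + q·m : p, q ∈ ℕ, p + q ≥ 1}, and assume n + λ ∉ S'. Let A, B ∈ m ⊂ ℂ[[x,y]] define a singular vector field X = A ∂/∂x + B ∂/∂y whose linear part L(X) is NOT nilpotent. Set P(t) = A(t^n,y(t))·y'(t) − B(t^n,y(t))·n·t^{n−1}. Then P ≠ 0, and υ := ord_t P + 1 satisfies υ ≤ λ + n; moreover, if υ < λ + n, then υ ∈ S', υ ≥ 2n, and υ ≠ m. (In terms of the contact exponent j = υ − n of X with Γ: j ≤ λ, and j < λ implies j is of the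 form p·n + q·m − n with j ≥ n and j ≠ m − n.) -/
/-!
STATEMENT 4: bounds on the contact of a non-nilpotent singular vector field
with a branch in normal form `(t^n, a_m t^m + a_λ t^λ + …)`.  Setting
`P(t) = A(φ(t))·y'(t) − B(φ(t))·n·t^{n−1}` and `υ = ord_t P + 1`, one has
`P ≠ 0`, `υ ≤ λ + n`, and if `υ < λ + n` then `υ ∈ S'`, `υ ≥ 2n` and `υ ≠ m`.
-/

open PowerSeries

/-- Substitution of `(x(t), y(t))` (both with zero constant term) into a
two-variable formal power series. -/
noncomputable def substPS (xt yt : PowerSeries ℂ) (f : MvPowerSeries (Fin 2) ℂ) :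
    PowerSeries ℂ :=
  PowerSeries.mk fun k =>
    ∑ ij ∈ Finset.range (k + 1) ×ˢ Finset.range (k + 1),
      MvPowerSeries.coeff (Finsupp.single 0 ij.1 + Finsupp.single 1 ij.2) f *
        PowerSeries.coeff k (xt ^ ij.1 * yt ^ ij.2)

/-- The maximal ideal of `ℂ[[x,y]]`: series with zero constant term. -/
noncomputable def mIdeal : Ideal (MvPowerSeries (Fin 2) ℂ) :=
  RingHom.ker ((MvPowerSeries.constantCoeff : MvPowerSeries (Fin 2) ℂ →+* ℂ))

/-- The linear part of the vector field `X = A ∂/∂x + B ∂/∂y`: the matrix of the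
degree-1 coefficients of `A` (first row) and `B` (second row). -/
noncomputable def linPart (A B : MvPowerSeries (Fin 2) ℂ) : Matrix (Fin 2) (Fin 2) ℂ :=
  Matrix.of fun i j =>
    MvPowerSeries.coeff (Finsupp.single j 1) (if i = 0 then A else B)

namespace ContactAux

lemma multTable (n i : ℕ) :
    (i = 0 ∧ n * i = 0) ∨ (i = 1 ∧ n * i = n) ∨ (2 ≤ i ∧ 2 * n ≤ n * i) := by
  rcases Nat.lt_or_ge i 2 with h | h
  · interval_cases i
    · exact Or.inl ⟨rfl, by ring⟩
    · exact Or.inr (Or.inl ⟨rfl, by ring⟩)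
  · refine Or.inr (Or.inr ⟨h, ?_⟩)
    have := Nat.mul_le_mul_left n h
    omega

lemma multTable' (m j : ℕ) :
    (j = 0 ∧ j * m = 0) ∨ (j = 1 ∧ j * m = m) ∨ (2 ≤ j ∧ 2 * m ≤ j * m) := by
  rcases Nat.lt_or_ge j 2 with h | h
  · interval_cases j
    · exact Or.inl ⟨rfl, by ring⟩
    · exact Or.inr (Or.inl ⟨rfl, by ring⟩)
  · exact Or.inr (Or.inr ⟨h, Nat.mul_le_mul_right m h⟩)

lemma multTable3 (n i : ℕ) :
    (i = 0 ∧ n * (i + 1) = n) ∨ (i = 1 ∧ n * (i + 1) = 2 * n) ∨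
      (2 ≤ i ∧ 3 * n ≤ n * (i + 1)) := by
  rcases Nat.lt_or_ge i 2 with h | h
  · interval_cases i
    · exact Or.inl ⟨rfl, by ring⟩
    · exact Or.inr (Or.inl ⟨rfl, by ring⟩)
  · refine Or.inr (Or.inr ⟨h, ?_⟩)
    have := Nat.mul_le_mul_left n (show 3 ≤ i + 1 by omega)
    omega

variable {n m lam : ℕ} {y : PowerSeries ℂ}

lemma ysupp (hlow : ∀ i < m, coeff i y = 0)
    (hmid : ∀ i, m < i → i < lam → coeff i y = 0)
    {b : ℕ} (hb : coeff b y ≠ 0) : b = m ∨ lam ≤ b := by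
  by_contra h
  push_neg at h
  rcases Nat.lt_trichotomy b m with h1 | h1 | h1
  · exact hb (hlow b h1)
  · exact h.1 h1
  · exact hb (hmid b h1 h.2)

lemma ypowsupp (hm1 : 1 ≤ m) (hml : m < lam) (hlow : ∀ i < m, coeff i y = 0)
    (hmid : ∀ i, m < i → i < lam → coeff i y = 0) :
    ∀ j r : ℕ, coeff r (y ^ j) ≠ 0 → r = j * m ∨ (1 ≤ j ∧ j * m + (lam - m) ≤ r) := by
  intro j
  induction j with
  | zero =>
    intro r hr
    left
    rw [pow_zero, coeff_one] at hr
    rw [Nat.zero_mul]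
    by_contra h
    rw [if_neg h] at hr
    exact hr rfl
  | succ j ih =>
    intro r hr
    rw [pow_succ, coeff_mul] at hr
    obtain ⟨p, hp, hne⟩ := Finset.exists_ne_zero_of_sum_ne_zero hr
    rw [Finset.HasAntidiagonal.mem_antidiagonal] at hp
    have h1 := ih p.1 (left_ne_zero_of_mul hne)
    have h2 := ysupp hlow hmid (right_ne_zero_of_mul hne)
    have hsm : (j + 1) * m = j * m + m := by ring
    rw [hsm]
    obtain ⟨t, ht⟩ : ∃ t, j * m = t := ⟨_, rfl⟩
    rw [ht] at h1 ⊢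
    omega

lemma dysupp (hlow : ∀ i < m, coeff i y = 0)
    (hmid : ∀ i, m < i → i < lam → coeff i y = 0)
    {b : ℕ} (hb : coeff b (derivativeFun y) ≠ 0) : b = m - 1 ∨ lam - 1 ≤ b := by
  rw [(show ∀ (f : ℂ⟦X⟧) (b : ℕ), coeff b (derivativeFun f) = coeff (b + 1) f * (b + 1) from coeff_derivative)] at hb
  have := ysupp hlow hmid (left_ne_zero_of_mul hb)
  omega

lemma wsupp (hm1 : 1 ≤ m) (hml : m < lam) (hlow : ∀ i < m, coeff i y = 0)
    (hmid : ∀ i, m < i → i < lam → coeff i y = 0) (j r : ℕ)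
    (hr : coeff r (y ^ j * derivativeFun y) ≠ 0) :
    r = j * m + (m - 1) ∨ j * m + (lam - 1) ≤ r := by
  rw [coeff_mul] at hr
  obtain ⟨p, hp, hne⟩ := Finset.exists_ne_zero_of_sum_ne_zero hr
  rw [Finset.HasAntidiagonal.mem_antidiagonal] at hp
  have h1 := ypowsupp hm1 hml hlow hmid j p.1 (left_ne_zero_of_mul hne)
  have h2 := dysupp hlow hmid (right_ne_zero_of_mul hne)
  obtain ⟨t, ht⟩ : ∃ t, j * m = t := ⟨_, rfl⟩
  rw [ht] at h1 ⊢
  omega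

lemma ypow_le (hm1 : 1 ≤ m) (hml : m < lam) (hlow : ∀ i < m, coeff i y = 0)
    (hmid : ∀ i, m < i → i < lam → coeff i y = 0) (j r : ℕ)
    (h : coeff r (y ^ j) ≠ 0) : j ≤ r := by
  have h1 := ypowsupp hm1 hml hlow hmid j r h
  rcases Nat.eq_zero_or_pos j with hj | hj
  · omega
  · have : j ≤ j * m := Nat.le_mul_of_pos_right j hm1
    omega

lemma coeff_xpow_ypow_zero (hn1 : 1 ≤ n) (hm1 : 1 ≤ m) (hml : m < lam)
    (hlow : ∀ i < m, coeff i y = 0)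
    (hmid : ∀ i, m < i → i < lam → coeff i y = 0) {a i j k : ℕ}
    (hak : a ≤ k) (hij : k + 1 ≤ i ∨ k + 1 ≤ j) :
    coeff a (((X : ℂ⟦X⟧) ^ n) ^ i * y ^ j) = 0 := by
  obtain ⟨u, hu⟩ : ∃ u, n * i = u := ⟨_, rfl⟩
  have hi : i ≤ u := hu ▸ Nat.le_mul_of_pos_left i hn1
  rw [← pow_mul, hu, mul_comm, coeff_mul_X_pow']
  split_ifs with h
  · by_contra hc
    have hj := ypow_le hm1 hml hlow hmid j (a - u) hc
    omega
  · rfl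

lemma subst_coeff_mul (hn1 : 1 ≤ n) (hm1 : 1 ≤ m) (hml : m < lam)
    (hlow : ∀ i < m, coeff i y = 0)
    (hmid : ∀ i, m < i → i < lam → coeff i y = 0)
    (f : MvPowerSeries (Fin 2) ℂ) (g : ℂ⟦X⟧) (k : ℕ) :
    coeff k (substPS (X ^ n) y f * g) =
      ∑ p ∈ Finset.range (k + 1) ×ˢ Finset.range (k + 1),
        MvPowerSeries.coeff (Finsupp.single 0 p.1 + Finsupp.single 1 p.2) f *
          coeff k (y ^ p.2 * g * X ^ (n * p.1)) := by
  rw [coeff_mul]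
  have key : ∀ q ∈ Finset.HasAntidiagonal.antidiagonal k,
      coeff q.1 (substPS (X ^ n) y f) * coeff q.2 g =
      ∑ p ∈ Finset.range (k + 1) ×ˢ Finset.range (k + 1),
        MvPowerSeries.coeff (Finsupp.single 0 p.1 + Finsupp.single 1 p.2) f *
          (coeff q.1 (((X : ℂ⟦X⟧) ^ n) ^ p.1 * y ^ p.2) * coeff q.2 g) := by
    intro q hq
    rw [Finset.HasAntidiagonal.mem_antidiagonal] at hq
    have hq1 : q.1 ≤ k := by omega
    have hmain : coeff q.1 (substPS (X ^ n) y f) =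
        ∑ p ∈ Finset.range (k + 1) ×ˢ Finset.range (k + 1),
          MvPowerSeries.coeff (Finsupp.single 0 p.1 + Finsupp.single 1 p.2) f *
            coeff q.1 (((X : ℂ⟦X⟧) ^ n) ^ p.1 * y ^ p.2) := by
      rw [substPS, coeff_mk]
      refine Finset.sum_subset ?_ ?_
      · intro p hp
        simp only [Finset.mem_product, Finset.mem_range] at hp ⊢
        omega
      · intro p hp hnp
        simp only [Finset.mem_product, Finset.mem_range] at hp hnp
        have hz : coeff q.1 (((X : ℂ⟦X⟧) ^ n) ^ p.1 * y ^ p.2) = 0 := by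
          refine coeff_xpow_ypow_zero hn1 hm1 hml hlow hmid (le_refl q.1) ?_
          omega
        rw [hz, mul_zero]
    rw [hmain, Finset.sum_mul]
    exact Finset.sum_congr rfl fun p _ => by ring
  rw [Finset.sum_congr rfl key, Finset.sum_comm]
  refine Finset.sum_congr rfl fun p _ => ?_
  rw [← Finset.mul_sum]
  congr 1
  rw [show y ^ p.2 * g * X ^ (n * p.1) = (((X : ℂ⟦X⟧) ^ n) ^ p.1 * y ^ p.2) * g by
    rw [← pow_mul]; ring]
  rw [coeff_mul]

lemma master (hn1 : 1 ≤ n) (hm1 : 1 ≤ m) (hml : m < lam)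
    (hlow : ∀ i < m, coeff i y = 0)
    (hmid : ∀ i, m < i → i < lam → coeff i y = 0)
    (A B : MvPowerSeries (Fin 2) ℂ) (k : ℕ) :
    coeff k (substPS (X ^ n) y A * derivativeFun y -
        substPS (X ^ n) y B * (C (n : ℂ) * X ^ (n - 1))) =
      ∑ p ∈ Finset.range (k + 1) ×ˢ Finset.range (k + 1),
        (MvPowerSeries.coeff (Finsupp.single 0 p.1 + Finsupp.single 1 p.2) A *
            coeff k (y ^ p.2 * derivativeFun y * X ^ (n * p.1)) -
          MvPowerSeries.coeff (Finsupp.single 0 p.1 + Finsupp.single 1 p.2) B *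
            coeff k (y ^ p.2 * (C (n : ℂ) * X ^ (n - 1)) * X ^ (n * p.1))) := by
  rw [map_sub, subst_coeff_mul hn1 hm1 hml hlow hmid A (derivativeFun y) k,
    subst_coeff_mul hn1 hm1 hml hlow hmid B (C (n : ℂ) * X ^ (n - 1)) k,
    ← Finset.sum_sub_distrib]

lemma TA (hm1 : 1 ≤ m) (hml : m < lam)
    (hlow : ∀ i < m, coeff i y = 0)
    (hmid : ∀ i, m < i → i < lam → coeff i y = 0) {i j k : ℕ}
    (h : coeff k (y ^ j * derivativeFun y * X ^ (n * i)) ≠ 0) :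
    k + 1 = n * i + (j * m + m) ∨ n * i + (j * m + lam) ≤ k + 1 := by
  rw [coeff_mul_X_pow'] at h
  split_ifs at h with hle
  · have hw := wsupp hm1 hml hlow hmid j (k - n * i) h
    obtain ⟨t, ht⟩ : ∃ t, j * m = t := ⟨_, rfl⟩
    obtain ⟨u, hu⟩ : ∃ u, n * i = u := ⟨_, rfl⟩
    rw [ht] at hw ⊢
    rw [hu] at hw hle ⊢
    omega
  · exact absurd rfl h

lemma TB (hn1 : 1 ≤ n) (hm1 : 1 ≤ m) (hml : m < lam)
    (hlow : ∀ i < m, coeff i y = 0)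
    (hmid : ∀ i, m < i → i < lam → coeff i y = 0) {i j k : ℕ}
    (h : coeff k (y ^ j * (C (n : ℂ) * X ^ (n - 1)) * X ^ (n * i)) ≠ 0) :
    k + 1 = n * (i + 1) + j * m ∨ (1 ≤ j ∧ n * (i + 1) + j * m + (lam - m) ≤ k + 1) := by
  have hrw : y ^ j * (C (n : ℂ) * X ^ (n - 1)) * X ^ (n * i) =
      C (n : ℂ) * (y ^ j * X ^ (n * i + (n - 1))) := by
    rw [pow_add]; ring
  rw [hrw, coeff_C_mul] at h
  have h2 : coeff k (y ^ j * X ^ (n * i + (n - 1))) ≠ 0 := by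
    intro h0; rw [h0, mul_zero] at h; exact h rfl
  rw [coeff_mul_X_pow'] at h2
  split_ifs at h2 with hle
  · have hw := ypowsupp hm1 hml hlow hmid j _ h2
    have hni : n * (i + 1) = n * i + n := by ring
    obtain ⟨t, ht⟩ : ∃ t, j * m = t := ⟨_, rfl⟩
    obtain ⟨u, hu⟩ : ∃ u, n * i = u := ⟨_, rfl⟩
    rw [hni, ht, hu]
    rw [ht] at hw
    rw [hu] at hw hle
    omega
  · exact absurd rfl h2

end ContactAux

open ContactAux
theorem contact_of_non_nilpotent_bounded_by_lambda
    (n m lam : ℕ) (hn : 2 ≤ n) (hnm : n < m) (hmlam : m < lam) (hnd : ¬ n ∣ m)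
    (y : PowerSeries ℂ)
    (hlow : ∀ i < m, PowerSeries.coeff i y = 0)
    (hm : PowerSeries.coeff m y ≠ 0)
    (hmid : ∀ i, m < i → i < lam → PowerSeries.coeff i y = 0)
    (hlam : PowerSeries.coeff lam y ≠ 0)
    (hnotin : (n + lam) ∉ {s : ℕ | ∃ p q : ℕ, 1 ≤ p + q ∧ s = p * n + q * m})
    (A B : MvPowerSeries (Fin 2) ℂ) (hA : A ∈ mIdeal) (hB : B ∈ mIdeal)
    (hnonnil : ¬ IsNilpotent (linPart A B)) :
    substPS (PowerSeries.X ^ n) y A * PowerSeries.derivativeFun y -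
        substPS (PowerSeries.X ^ n) y B *
          (PowerSeries.C (n : ℂ) * PowerSeries.X ^ (n - 1)) ≠ 0 ∧
    ∃ d : ℕ,
      PowerSeries.order
          (substPS (PowerSeries.X ^ n) y A * PowerSeries.derivativeFun y -
            substPS (PowerSeries.X ^ n) y B *
              (PowerSeries.C (n : ℂ) * PowerSeries.X ^ (n - 1))) = (d : ℕ∞) ∧
      d + 1 ≤ lam + n ∧
      (d + 1 < lam + n →
        (d + 1) ∈ {s : ℕ | ∃ p q : ℕ, 1 ≤ p + q ∧ s = p * n + q * m} ∧
        2 * n ≤ d + 1 ∧ d + 1 ≠ m) := by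
  have hn1 : 1 ≤ n := by omega
  have hm1 : 1 ≤ m := by omega
  have hS : ∀ p q : ℕ, 1 ≤ p + q → n + lam ≠ p * n + q * m :=
    fun p q h1 he => hnotin ⟨p, q, h1, he⟩
  have hA0 : MvPowerSeries.coeff
      (Finsupp.single (0 : Fin 2) 0 + Finsupp.single (1 : Fin 2) 0) A = 0 := by
    have h0 : (Finsupp.single (0 : Fin 2) (0 : ℕ) + Finsupp.single (1 : Fin 2) (0 : ℕ)) = 0 := by
      simp
    rw [h0, MvPowerSeries.coeff_zero_eq_constantCoeff_apply]
    exact RingHom.mem_ker.mp hA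
  have hB0 : MvPowerSeries.coeff
      (Finsupp.single (0 : Fin 2) 0 + Finsupp.single (1 : Fin 2) 0) B = 0 := by
    have h0 : (Finsupp.single (0 : Fin 2) (0 : ℕ) + Finsupp.single (1 : Fin 2) (0 : ℕ)) = 0 := by
      simp
    rw [h0, MvPowerSeries.coeff_zero_eq_constantCoeff_apply]
    exact RingHom.mem_ker.mp hB
  set P := substPS (X ^ n) y A * derivativeFun y -
      substPS (X ^ n) y B * (C (n : ℂ) * X ^ (n - 1)) with hPdef
  -- vanishing criteria for the atomic coefficients
  have hvanA : ∀ k i j : ℕ,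
      ¬(k + 1 = n * i + (j * m + m) ∨ n * i + (j * m + lam) ≤ k + 1) →
      coeff k (y ^ j * derivativeFun y * X ^ (n * i)) = 0 := by
    intro k i j hcond
    by_contra hc
    exact hcond (TA hm1 hmlam hlow hmid hc)
  have hvanB : ∀ k i j : ℕ,
      ¬(k + 1 = n * (i + 1) + j * m ∨ (1 ≤ j ∧ n * (i + 1) + j * m + (lam - m) ≤ k + 1)) →
      coeff k (y ^ j * (C (n : ℂ) * X ^ (n - 1)) * X ^ (n * i)) = 0 := by
    intro k i j hcond
    by_contra hc
    exact hcond (TB hn1 hm1 hmlam hlow hmid hc)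
  -- values of the special atomic coefficients
  have hcA10 : ∀ k : ℕ, n ≤ k →
      coeff k (y ^ 0 * derivativeFun y * X ^ (n * 1)) =
        coeff (k - n + 1) y * (((k - n : ℕ) : ℂ) + 1) := by
    intro k hk
    rw [pow_zero, one_mul, Nat.mul_one, coeff_mul_X_pow', if_pos hk, (show ∀ (f : ℂ⟦X⟧) (b : ℕ), coeff b (derivativeFun f) = coeff (b + 1) f * (b + 1) from coeff_derivative)]
  have hcB10 : ∀ k : ℕ,
      coeff k (y ^ 0 * (C (n : ℂ) * X ^ (n - 1)) * X ^ (n * 1)) =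
        (n : ℂ) * (if k = (n - 1) + n then 1 else 0) := by
    intro k
    rw [show y ^ 0 * (C (n : ℂ) * X ^ (n - 1)) * X ^ (n * 1) =
        C (n : ℂ) * X ^ ((n - 1) + n) by rw [pow_add, Nat.mul_one]; ring]
    rw [coeff_C_mul, coeff_X_pow]
  have hcA01 : ∀ k : ℕ,
      coeff k (y ^ 1 * derivativeFun y * X ^ (n * 0)) =
        coeff k (y ^ 1 * derivativeFun y) := by
    intro k
    rw [Nat.mul_zero, pow_zero, mul_one]
  have hcB01 : ∀ k : ℕ, n - 1 ≤ k →
      coeff k (y ^ 1 * (C (n : ℂ) * X ^ (n - 1)) * X ^ (n * 0)) =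
        (n : ℂ) * coeff (k - (n - 1)) y := by
    intro k hk
    rw [show y ^ 1 * (C (n : ℂ) * X ^ (n - 1)) * X ^ (n * 0) =
        C (n : ℂ) * (y * X ^ (n - 1)) by rw [Nat.mul_zero, pow_zero, pow_one]; ring]
    rw [coeff_C_mul, coeff_mul_X_pow', if_pos hk]
  -- E1 : the coefficient at 2n-1
  have hE1 : coeff (2 * n - 1) P =
      -(MvPowerSeries.coeff (Finsupp.single (0 : Fin 2) 1 + Finsupp.single (1 : Fin 2) 0) B *
        (n : ℂ)) := by
    rw [hPdef, master hn1 hm1 hmlam hlow hmid A B (2 * n - 1)]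
    have hmem : ((1 : ℕ), (0 : ℕ)) ∈
        Finset.range (2 * n - 1 + 1) ×ˢ Finset.range (2 * n - 1 + 1) := by
      simp only [Finset.mem_product, Finset.mem_range]
      omega
    rw [Finset.sum_eq_single_of_mem ((1 : ℕ), (0 : ℕ)) hmem ?_]
    · show MvPowerSeries.coeff _ A * coeff (2 * n - 1) (y ^ 0 * derivativeFun y * X ^ (n * 1))
        - MvPowerSeries.coeff _ B *
          coeff (2 * n - 1) (y ^ 0 * (C (n : ℂ) * X ^ (n - 1)) * X ^ (n * 1)) = _
      rw [hcA10 (2 * n - 1) (by omega), hcB10 (2 * n - 1),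
        show 2 * n - 1 - n + 1 = n by omega, hlow n hnm, if_pos (by omega : 2 * n - 1 = (n-1) + n)]
      ring
    · rintro ⟨i, j⟩ hpmem hpne
      show MvPowerSeries.coeff _ A * coeff (2 * n - 1) (y ^ j * derivativeFun y * X ^ (n * i))
        - MvPowerSeries.coeff _ B *
          coeff (2 * n - 1) (y ^ j * (C (n : ℂ) * X ^ (n - 1)) * X ^ (n * i)) = 0
      by_cases hij : i = 0 ∧ j = 0
      · obtain ⟨rfl, rfl⟩ := hij
        rw [hA0, hB0, zero_mul, zero_mul, sub_zero]
      · have hpne' : ¬(i = 1 ∧ j = 0) := fun hh => hpne (by rw [hh.1, hh.2])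
        have hzA : coeff (2 * n - 1) (y ^ j * derivativeFun y * X ^ (n * i)) = 0 := by
          apply hvanA
          intro hcond
          have h1 := multTable n i
          have h2 := multTable' m j
          have hm2n : m ≠ 2 * n := fun hh => hnd ⟨2, by omega⟩
          omega
        have hzB : coeff (2 * n - 1)
            (y ^ j * (C (n : ℂ) * X ^ (n - 1)) * X ^ (n * i)) = 0 := by
          apply hvanB
          intro hcond
          have h1 := multTable3 n i
          have h2 := multTable' m j
          omega
        rw [hzA, hzB, mul_zero, mul_zero, sub_zero]
  -- E2 : the coefficient at n+m-1
  have hE2 : coeff (n + m - 1) P =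
      (MvPowerSeries.coeff (Finsupp.single (0 : Fin 2) 1 + Finsupp.single (1 : Fin 2) 0) A *
          (m : ℂ) -
        MvPowerSeries.coeff (Finsupp.single (0 : Fin 2) 0 + Finsupp.single (1 : Fin 2) 1) B *
          (n : ℂ)) * coeff m y := by
    rw [hPdef, master hn1 hm1 hmlam hlow hmid A B (n + m - 1)]
    have hpairsub : ({((1 : ℕ), (0 : ℕ)), ((0 : ℕ), (1 : ℕ))} : Finset (ℕ × ℕ)) ⊆
        Finset.range (n + m - 1 + 1) ×ˢ Finset.range (n + m - 1 + 1) := by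
      intro p hp
      simp only [Finset.mem_insert, Finset.mem_singleton] at hp
      rcases hp with rfl | rfl <;>
        · simp only [Finset.mem_product, Finset.mem_range]
          omega
    rw [← Finset.sum_subset hpairsub ?_, Finset.sum_pair (by decide)]
    · show (MvPowerSeries.coeff _ A *
          coeff (n + m - 1) (y ^ 0 * derivativeFun y * X ^ (n * 1)) -
        MvPowerSeries.coeff _ B *
          coeff (n + m - 1) (y ^ 0 * (C (n : ℂ) * X ^ (n - 1)) * X ^ (n * 1))) +
        (MvPowerSeries.coeff _ A *
          coeff (n + m - 1) (y ^ 1 * derivativeFun y * X ^ (n * 0)) -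
        MvPowerSeries.coeff _ B *
          coeff (n + m - 1) (y ^ 1 * (C (n : ℂ) * X ^ (n - 1)) * X ^ (n * 0))) = _
      have hz1 : coeff (n + m - 1) (y ^ 1 * derivativeFun y) = 0 := by
        by_contra hc
        have := wsupp hm1 hmlam hlow hmid 1 (n + m - 1) hc
        have h1m : 1 * m = m := by ring
        omega
      rw [hcA10 (n + m - 1) (by omega), hcB10 (n + m - 1), hcA01 (n + m - 1), hz1,
        hcB01 (n + m - 1) (by omega),
        show n + m - 1 - n + 1 = m by omega,
        show n + m - 1 - (n - 1) = m by omega,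
        if_neg (by omega : ¬ n + m - 1 = (n - 1) + n)]
      have hcast : ((n + m - 1 - n : ℕ) : ℂ) + 1 = (m : ℂ) := by
        rw [show n + m - 1 - n = m - 1 by omega]
        have : ((m - 1 : ℕ) : ℂ) = (m : ℂ) - 1 := by
          have := Nat.cast_sub (R := ℂ) hm1
          simpa using this
        rw [this]; ring
      rw [hcast]
      ring
    · rintro ⟨i, j⟩ hpmem hpnotpair
      simp only [Finset.mem_insert, Finset.mem_singleton] at hpnotpair
      push_neg at hpnotpair
      obtain ⟨hpne1, hpne2⟩ := hpnotpair
      show MvPowerSeries.coeff _ A *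
          coeff (n + m - 1) (y ^ j * derivativeFun y * X ^ (n * i)) -
        MvPowerSeries.coeff _ B *
          coeff (n + m - 1) (y ^ j * (C (n : ℂ) * X ^ (n - 1)) * X ^ (n * i)) = 0
      by_cases hij : i = 0 ∧ j = 0
      · obtain ⟨rfl, rfl⟩ := hij
        rw [hA0, hB0, zero_mul, zero_mul, sub_zero]
      · have hpne1' : ¬(i = 1 ∧ j = 0) := fun hh => hpne1 (by rw [hh.1, hh.2])
        have hpne2' : ¬(i = 0 ∧ j = 1) := fun hh => hpne2 (by rw [hh.1, hh.2])
        have hzA : coeff (n + m - 1) (y ^ j * derivativeFun y * X ^ (n * i)) = 0 := by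
          apply hvanA
          intro hcond
          have h1 := multTable n i
          have h2 := multTable' m j
          omega
        have hzB : coeff (n + m - 1)
            (y ^ j * (C (n : ℂ) * X ^ (n - 1)) * X ^ (n * i)) = 0 := by
          apply hvanB
          intro hcond
          have h1 := multTable3 n i
          have h2 := multTable' m j
          have hni : n * (i + 1) = n * i + n := by ring
          have hdvd : m ≠ n * i := fun hh => hnd ⟨i, hh⟩
          omega
        rw [hzA, hzB, mul_zero, mul_zero, sub_zero]
  -- E3 : the coefficient at lam+n-1
  have hE3 : coeff (lam + n - 1) P =
      (MvPowerSeries.coeff (Finsupp.single (0 : Fin 2) 1 + Finsupp.single (1 : Fin 2) 0) A *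
          (lam : ℂ) -
        MvPowerSeries.coeff (Finsupp.single (0 : Fin 2) 0 + Finsupp.single (1 : Fin 2) 1) B *
          (n : ℂ)) * coeff lam y := by
    rw [hPdef, master hn1 hm1 hmlam hlow hmid A B (lam + n - 1)]
    have hpairsub : ({((1 : ℕ), (0 : ℕ)), ((0 : ℕ), (1 : ℕ))} : Finset (ℕ × ℕ)) ⊆
        Finset.range (lam + n - 1 + 1) ×ˢ Finset.range (lam + n - 1 + 1) := by
      intro p hp
      simp only [Finset.mem_insert, Finset.mem_singleton] at hp
      rcases hp with rfl | rfl <;>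
        · simp only [Finset.mem_product, Finset.mem_range]
          omega
    rw [← Finset.sum_subset hpairsub ?_, Finset.sum_pair (by decide)]
    · show (MvPowerSeries.coeff _ A *
          coeff (lam + n - 1) (y ^ 0 * derivativeFun y * X ^ (n * 1)) -
        MvPowerSeries.coeff _ B *
          coeff (lam + n - 1) (y ^ 0 * (C (n : ℂ) * X ^ (n - 1)) * X ^ (n * 1))) +
        (MvPowerSeries.coeff _ A *
          coeff (lam + n - 1) (y ^ 1 * derivativeFun y * X ^ (n * 0)) -
        MvPowerSeries.coeff _ B *
          coeff (lam + n - 1) (y ^ 1 * (C (n : ℂ) * X ^ (n - 1)) * X ^ (n * 0))) = _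
      have hz1 : coeff (lam + n - 1) (y ^ 1 * derivativeFun y) = 0 := by
        by_contra hc
        have hw := wsupp hm1 hmlam hlow hmid 1 (lam + n - 1) hc
        have h1m : 1 * m = m := by ring
        have hs2 := hS 0 2 (by omega)
        omega
      rw [hcA10 (lam + n - 1) (by omega), hcB10 (lam + n - 1), hcA01 (lam + n - 1), hz1,
        hcB01 (lam + n - 1) (by omega),
        show lam + n - 1 - n + 1 = lam by omega,
        show lam + n - 1 - (n - 1) = lam by omega,
        if_neg (by omega : ¬ lam + n - 1 = (n - 1) + n)]
      have hcast : ((lam + n - 1 - n : ℕ) : ℂ) + 1 = (lam : ℂ) := by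
        rw [show lam + n - 1 - n = lam - 1 by omega]
        have h1lam : 1 ≤ lam := by omega
        have : ((lam - 1 : ℕ) : ℂ) = (lam : ℂ) - 1 := by
          have := Nat.cast_sub (R := ℂ) h1lam
          simpa using this
        rw [this]; ring
      rw [hcast]
      ring
    · rintro ⟨i, j⟩ hpmem hpnotpair
      simp only [Finset.mem_insert, Finset.mem_singleton] at hpnotpair
      push_neg at hpnotpair
      obtain ⟨hpne1, hpne2⟩ := hpnotpair
      show MvPowerSeries.coeff _ A *
          coeff (lam + n - 1) (y ^ j * derivativeFun y * X ^ (n * i)) -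
        MvPowerSeries.coeff _ B *
          coeff (lam + n - 1) (y ^ j * (C (n : ℂ) * X ^ (n - 1)) * X ^ (n * i)) = 0
      by_cases hij : i = 0 ∧ j = 0
      · obtain ⟨rfl, rfl⟩ := hij
        rw [hA0, hB0, zero_mul, zero_mul, sub_zero]
      · have hpne1' : ¬(i = 1 ∧ j = 0) := fun hh => hpne1 (by rw [hh.1, hh.2])
        have hpne2' : ¬(i = 0 ∧ j = 1) := fun hh => hpne2 (by rw [hh.1, hh.2])
        have hzA : coeff (lam + n - 1) (y ^ j * derivativeFun y * X ^ (n * i)) = 0 := by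
          apply hvanA
          intro hcond
          have h1 := multTable n i
          have h2 := multTable' m j
          have hSi : n + lam ≠ i * n + (j + 1) * m := hS i (j + 1) (by omega)
          have hb : i * n + (j + 1) * m = n * i + (j * m + m) := by ring
          omega
        have hzB : coeff (lam + n - 1)
            (y ^ j * (C (n : ℂ) * X ^ (n - 1)) * X ^ (n * i)) = 0 := by
          apply hvanB
          intro hcond
          have h1 := multTable3 n i
          have h2 := multTable' m j
          have hSb : n + lam ≠ (i + 1) * n + j * m := hS (i + 1) j (by omega)
          have hb2 : (i + 1) * n + j * m = n * (i + 1) + j * m := by ring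
          omega
        rw [hzA, hzB, mul_zero, mul_zero, sub_zero]
  -- one of the three coefficients is nonzero
  have hkey : coeff (2 * n - 1) P ≠ 0 ∨ coeff (n + m - 1) P ≠ 0 ∨
      coeff (lam + n - 1) P ≠ 0 := by
    by_contra hcon
    push_neg at hcon
    obtain ⟨h1, h2, h3⟩ := hcon
    rw [hE1] at h1
    rw [hE2] at h2
    rw [hE3] at h3
    have hnC : (n : ℂ) ≠ 0 := Nat.cast_ne_zero.mpr (by omega)
    have hB10 : MvPowerSeries.coeff
        (Finsupp.single (0 : Fin 2) 1 + Finsupp.single (1 : Fin 2) 0) B = 0 := by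
      rcases mul_eq_zero.mp (neg_eq_zero.mp h1) with h | h
      · exact h
      · exact absurd h hnC
    have h2' : MvPowerSeries.coeff
          (Finsupp.single (0 : Fin 2) 1 + Finsupp.single (1 : Fin 2) 0) A * (m : ℂ) =
        MvPowerSeries.coeff
          (Finsupp.single (0 : Fin 2) 0 + Finsupp.single (1 : Fin 2) 1) B * (n : ℂ) := by
      rcases mul_eq_zero.mp h2 with h | h
      · linear_combination h
      · exact absurd h hm
    have h3' : MvPowerSeries.coeff
          (Finsupp.single (0 : Fin 2) 1 + Finsupp.single (1 : Fin 2) 0) A * (lam : ℂ) =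
        MvPowerSeries.coeff
          (Finsupp.single (0 : Fin 2) 0 + Finsupp.single (1 : Fin 2) 1) B * (n : ℂ) := by
      rcases mul_eq_zero.mp h3 with h | h
      · linear_combination h
      · exact absurd h hlam
    have hmlamC : (m : ℂ) ≠ (lam : ℂ) := by
      intro hh
      exact absurd (Nat.cast_injective hh) (by omega)
    have hA10 : MvPowerSeries.coeff
        (Finsupp.single (0 : Fin 2) 1 + Finsupp.single (1 : Fin 2) 0) A = 0 := by
      have hml0 : MvPowerSeries.coeff
          (Finsupp.single (0 : Fin 2) 1 + Finsupp.single (1 : Fin 2) 0) A *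
          ((m : ℂ) - (lam : ℂ)) = 0 := by
        linear_combination h2' - h3'
      rcases mul_eq_zero.mp hml0 with h | h
      · exact h
      · exact absurd (by linear_combination h) hmlamC
    have hB01 : MvPowerSeries.coeff
        (Finsupp.single (0 : Fin 2) 0 + Finsupp.single (1 : Fin 2) 1) B = 0 := by
      have h0 : MvPowerSeries.coeff
          (Finsupp.single (0 : Fin 2) 0 + Finsupp.single (1 : Fin 2) 1) B * (n : ℂ) = 0 := by
        rw [← h2', hA10, zero_mul]
      rcases mul_eq_zero.mp h0 with h | h
      · exact h
      · exact absurd h hnC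
    -- now the linear part is nilpotent, contradiction
    apply hnonnil
    have hs10 : (Finsupp.single (0 : Fin 2) 1 + Finsupp.single (1 : Fin 2) 0) =
        Finsupp.single (0 : Fin 2) 1 := by
      rw [Finsupp.single_zero, add_zero]
    have hs01 : (Finsupp.single (0 : Fin 2) 0 + Finsupp.single (1 : Fin 2) 1) =
        Finsupp.single (1 : Fin 2) 1 := by
      rw [Finsupp.single_zero, zero_add]
    have hM00 : linPart A B 0 0 = 0 := by
      show MvPowerSeries.coeff (Finsupp.single (0 : Fin 2) 1)
        (if (0 : Fin 2) = 0 then A else B) = 0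
      rw [if_pos rfl, ← hs10]
      exact hA10
    have hM10 : linPart A B 1 0 = 0 := by
      show MvPowerSeries.coeff (Finsupp.single (0 : Fin 2) 1)
        (if (1 : Fin 2) = 0 then A else B) = 0
      rw [if_neg (by decide), ← hs10]
      exact hB10
    have hM11 : linPart A B 1 1 = 0 := by
      show MvPowerSeries.coeff (Finsupp.single (1 : Fin 2) 1)
        (if (1 : Fin 2) = 0 then A else B) = 0
      rw [if_neg (by decide), ← hs01]
      exact hB01
    refine ⟨2, ?_⟩
    have hsq : ∀ i j : Fin 2, (linPart A B ^ 2) i j =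
        linPart A B i 0 * linPart A B 0 j + linPart A B i 1 * linPart A B 1 j := by
      intro i j
      rw [pow_two, Matrix.mul_apply, Fin.sum_univ_two]
    ext i j
    rw [hsq, Matrix.zero_apply]
    match i, j with
    | 0, 0 => rw [hM00, hM10]; ring
    | 0, 1 => rw [hM00, hM11]; ring
    | 1, 0 => rw [hM10, hM00]; ring
    | 1, 1 => rw [hM10, hM11]; ring
  -- the structural lemma for coefficients of small order
  have hV : ∀ k : ℕ, k + 1 < lam + n → coeff k P ≠ 0 →
      (∃ p q : ℕ, 1 ≤ p + q ∧ k + 1 = p * n + q * m) ∧ 2 * n ≤ k + 1 ∧ k + 1 ≠ m := by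
    intro k hk hc
    rw [hPdef, master hn1 hm1 hmlam hlow hmid A B k] at hc
    obtain ⟨p, hpmem, hne⟩ := Finset.exists_ne_zero_of_sum_ne_zero hc
    obtain ⟨i, j⟩ := p
    have hij : ¬(i = 0 ∧ j = 0) := by
      rintro ⟨rfl, rfl⟩
      apply hne
      show MvPowerSeries.coeff _ A * _ - MvPowerSeries.coeff _ B * _ = 0
      rw [hA0, hB0, zero_mul, zero_mul, sub_zero]
    have hor : (MvPowerSeries.coeff (Finsupp.single (0 : Fin 2) i + Finsupp.single (1 : Fin 2) j) A *
          coeff k (y ^ j * derivativeFun y * X ^ (n * i)) ≠ 0) ∨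
        (MvPowerSeries.coeff (Finsupp.single (0 : Fin 2) i + Finsupp.single (1 : Fin 2) j) B *
          coeff k (y ^ j * (C (n : ℂ) * X ^ (n - 1)) * X ^ (n * i)) ≠ 0) := by
      by_contra hcon
      push_neg at hcon
      apply hne
      show MvPowerSeries.coeff _ A * _ - MvPowerSeries.coeff _ B * _ = 0
      rw [hcon.1, hcon.2]
      ring
    have h1 := multTable n i
    have h2 := multTable' m j
    rcases hor with hor | hor
    · have hTA := TA hm1 hmlam hlow hmid (right_ne_zero_of_mul hor)
      rcases hTA with h | h
      · refine ⟨⟨i, j + 1, by omega, by rw [h]; ring⟩, by omega, by omega⟩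
      · omega
    · have hTB := TB hn1 hm1 hmlam hlow hmid (right_ne_zero_of_mul hor)
      have h3 := multTable3 n i
      have hni : n * (i + 1) = n * i + n := by ring
      rcases hTB with h | h
      · refine ⟨⟨i + 1, j, by omega, by rw [h]; ring⟩, by omega, ?_⟩
        intro hkm
        rcases h2 with ⟨hj0, hj0'⟩ | h2' | h2'
        · exact hnd ⟨i + 1, by omega⟩
        · omega
        · omega
      · omega
  -- assemble the final statement
  obtain ⟨k0, hk0l, hk0⟩ : ∃ k0, k0 + 1 ≤ lam + n ∧ coeff k0 P ≠ 0 := by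
    rcases hkey with h | h | h
    · exact ⟨2 * n - 1, by omega, h⟩
    · exact ⟨n + m - 1, by omega, h⟩
    · exact ⟨lam + n - 1, by omega, h⟩
  have hP0 : P ≠ 0 := fun h0 => hk0 (by rw [h0, map_zero])
  refine ⟨hP0, ?_⟩
  have hfin : P.order < ⊤ := PowerSeries.order_finite_iff_ne_zero.mpr hP0
  refine ⟨P.order.lift hfin, (ENat.coe_lift _ _).symm, ?_, ?_⟩
  · have hle := PowerSeries.order_le k0 hk0
    have hcast : (P.order.lift hfin : ℕ∞) ≤ (k0 : ℕ∞) := by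
      rw [ENat.coe_lift]; exact hle
    have hd : P.order.lift hfin ≤ k0 := by exact_mod_cast hcast
    omega
  · intro hlt
    have hdne := PowerSeries.coeff_order hP0
    rw [← ENat.lift_eq_toNat_of_lt_top hfin] at hdne
    exact hV (P.order.lift hfin) hlt hdne
end

section
/- Let n ≥ 1 and for each integer i ≥ n let a_i : ℂ → ℂ be a function analytic at 0, with a_n(0) ≠ 0. Then there exist functions r_i : ℂ → ℂ for i ≥ 1, each analytic at 0, with r_1(0) ≠ 0, such that the power-series identity (Σ_{i≥1} r_i(z)·t^i)^n = Σ_{i≥n} a_i(z)·t^i holds coefficientwise near 0: for every k ∈ ℕ there is a neighbourhood of 0 in ℂ on which the coefficient of t^k in (Σ_{i≥1} r_i(z) t^i)^n equals a_k(z) (where a_k := 0 for k < n). -/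
/-!
STATEMENT 7: `n`-th roots of a power series with coefficients analytic in a
parameter.  If `a(z) = Σ_{i≥n} a_i(z) t^i` with each `a_i` analytic at `0` and
`a_n(0) ≠ 0`, there is `r(z) = Σ_{i≥1} r_i(z) t^i` with each `r_i` analytic at
`0`, `r_1(0) ≠ 0`, and `r(z)^n = a(z)` coefficientwise near `0`.
-/

open PowerSeries

/-- Coefficients of powers of a power series with analytic coefficients are analytic. -/
lemma aux_coeff_pow_analytic {f : ℕ → ℂ → ℂ} (hf : ∀ i, AnalyticAt ℂ (f i) 0) (j : ℕ) :
    ∀ m : ℕ, AnalyticAt ℂ (fun z => PowerSeries.coeff m ((PowerSeries.mk fun i => f i z) ^ j)) 0 := by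
  induction j with
  | zero =>
    intro m
    have : (fun z => PowerSeries.coeff m ((PowerSeries.mk fun i => f i z) ^ 0))
        = fun _ : ℂ => (PowerSeries.coeff m (1 : ℂ⟦X⟧)) := by
      funext z; simp
    rw [this]; exact analyticAt_const
  | succ j ih =>
    intro m
    have : (fun z => PowerSeries.coeff m ((PowerSeries.mk fun i => f i z) ^ (j + 1)))
        = fun z => ∑ p ∈ Finset.HasAntidiagonal.antidiagonal m,
            (PowerSeries.coeff p.1 ((PowerSeries.mk fun i => f i z) ^ j)) * f p.2 z := by
      funext z
      rw [pow_succ, PowerSeries.coeff_mul]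
      simp [PowerSeries.coeff_mk]
    rw [this]
    exact Finset.analyticAt_fun_sum _ fun p _ => (ih p.1).mul (hf p.2)

/-- The `m`-th coefficient of a power only depends on coefficients up to `m`. -/
lemma aux_coeff_pow_congr {f g : ℂ⟦X⟧} (m : ℕ)
    (h : ∀ i ≤ m, PowerSeries.coeff i f = PowerSeries.coeff i g) (j : ℕ) :
    ∀ i ≤ m, PowerSeries.coeff i (f ^ j) = PowerSeries.coeff i (g ^ j) := by
  induction j with
  | zero => intro i _; simp
  | succ j ih =>
    intro i hi
    rw [pow_succ, pow_succ, PowerSeries.coeff_mul, PowerSeries.coeff_mul]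
    refine Finset.sum_congr rfl fun p hp => ?_
    rw [Finset.HasAntidiagonal.mem_antidiagonal] at hp
    have h1 : p.1 ≤ m := le_trans (by omega) hi
    have h2 : p.2 ≤ m := le_trans (by omega) hi
    rw [ih p.1 h1, h p.2 h2]

/-- Key expansion: coefficient `k+1` of `(T + c X^(k+1))^n`. -/
lemma aux_coeff_add_pow (T : ℂ⟦X⟧) (c : ℂ) (k n : ℕ) (hn : 1 ≤ n) :
    PowerSeries.coeff (k + 1) ((T + PowerSeries.C c * X ^ (k + 1)) ^ n)
      = PowerSeries.coeff (k + 1) (T ^ n)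
        + n * (PowerSeries.constantCoeff T) ^ (n - 1) * c := by
  rw [add_pow, map_sum]
  have key : ∀ j ∈ Finset.range (n + 1),
      PowerSeries.coeff (k + 1)
          (T ^ j * (PowerSeries.C c * X ^ (k + 1)) ^ (n - j) * (n.choose j : ℂ⟦X⟧))
        = (if j = n then PowerSeries.coeff (k + 1) (T ^ n) else 0)
          + (if j = n - 1 then n * (PowerSeries.constantCoeff T) ^ (n - 1) * c else 0) := by
    intro j hj
    rw [Finset.mem_range] at hj
    have hexp : (PowerSeries.C c * X ^ (k + 1)) ^ (n - j)
        = PowerSeries.C (c ^ (n - j)) * X ^ ((k + 1) * (n - j)) := by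
      rw [mul_pow, ← map_pow, ← pow_mul]
    rw [hexp]
    by_cases hjn : j = n
    · subst hjn
      simp only [Nat.sub_self, pow_zero, mul_one, map_one, Nat.choose_self, Nat.cast_one,
        if_pos rfl]
      have : j - 1 ≠ j := by omega
      rw [if_neg (by omega : ¬ j = j - 1)]
      ring_nf
      simp
    · rw [if_neg hjn]
      by_cases hjn1 : j = n - 1
      · subst hjn1
        have h1 : n - (n - 1) = 1 := by omega
        rw [if_pos rfl, h1, pow_one]
        have : T ^ (n - 1) * (PowerSeries.C c * X ^ ((k + 1) * 1)) * (↑(n.choose (n - 1)) : ℂ⟦X⟧)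
            = (PowerSeries.C c * (↑(n.choose (n - 1)) : ℂ⟦X⟧) * T ^ (n - 1)) * X ^ (k + 1) := by
          rw [mul_one]; ring
        rw [this, PowerSeries.coeff_mul_X_pow' , if_pos le_rfl, Nat.sub_self]
        rw [PowerSeries.coeff_zero_eq_constantCoeff]
        have hch : n.choose (n - 1) = n := by
          rw [← Nat.choose_symm (by omega : n - 1 ≤ n)]
          have : n - (n - 1) = 1 := by omega
          rw [this, Nat.choose_one_right]
        simp only [map_mul, map_pow, PowerSeries.constantCoeff_C]
        have : PowerSeries.constantCoeff (↑(n.choose (n - 1)) : ℂ⟦X⟧) = (n.choose (n - 1) : ℂ) := by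
          simp
        rw [this, hch]
        ring
      · rw [if_neg hjn1, add_zero]
        have hd : 2 ≤ n - j := by omega
        have : T ^ j * (PowerSeries.C (c ^ (n - j)) * X ^ ((k + 1) * (n - j))) * (↑(n.choose j) : ℂ⟦X⟧)
            = (T ^ j * PowerSeries.C (c ^ (n - j)) * (↑(n.choose j) : ℂ⟦X⟧)) * X ^ ((k + 1) * (n - j)) := by
          ring
        rw [this, PowerSeries.coeff_mul_X_pow', if_neg]
        have : k + 1 < (k + 1) * (n - j) := by nlinarith
        omega
  rw [Finset.sum_congr rfl key, Finset.sum_add_distrib]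
  rw [Finset.sum_ite_eq' (Finset.range (n + 1)) n, Finset.sum_ite_eq' (Finset.range (n + 1)) (n - 1)]
  rw [if_pos (Finset.mem_range.2 (by omega)), if_pos (Finset.mem_range.2 (by omega))]

/-- Recursively defined coefficient functions of the `n`-th root. -/
noncomputable def sAux (n : ℕ) (b : ℕ → ℂ → ℂ) (g0 : ℂ → ℂ) : ℕ → ℂ → ℂ
  | 0 => g0
  | k + 1 => fun z =>
      (b (k + 1) z - PowerSeries.coeff (k + 1)
        ((PowerSeries.mk fun i => if h : i ≤ k then sAux n b g0 i z else 0) ^ n))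
      / ((n : ℂ) * g0 z ^ (n - 1))
  decreasing_by omega

theorem analytic_nth_root_of_puiseux_component
    (n : ℕ) (hn : 1 ≤ n) (a : ℕ → ℂ → ℂ)
    (ha : ∀ i, n ≤ i → AnalyticAt ℂ (a i) 0)
    (han : a n 0 ≠ 0) :
    ∃ r : ℕ → ℂ → ℂ,
      (∀ i, 1 ≤ i → AnalyticAt ℂ (r i) 0) ∧ r 1 0 ≠ 0 ∧
      ∀ k : ℕ, ∀ᶠ z in nhds (0 : ℂ),
        PowerSeries.coeff k
            ((PowerSeries.mk fun i => if i = 0 then 0 else r i z) ^ n)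
          = if k < n then 0 else a k z := by
  -- shifted coefficients
  set b : ℕ → ℂ → ℂ := fun i z => a (i + n) z with hb_def
  have hb : ∀ i, AnalyticAt ℂ (b i) 0 := fun i => ha (i + n) (by omega)
  have hb0 : b 0 0 ≠ 0 := by simpa [hb_def] using han
  -- an n-th root of the leading coefficient
  obtain ⟨c, hc⟩ := IsAlgClosed.exists_pow_nat_eq (a n 0) (by omega : 0 < n)
  have hcne : c ≠ 0 := by
    intro h; rw [h, zero_pow (by omega : n ≠ 0)] at hc; exact han hc.symm
  -- analytic branch of the n-th root of b 0
  set g0 : ℂ → ℂ := fun z => c * Complex.exp (Complex.log (b 0 z / b 0 0) / n) with hg0_def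
  have hg0an : AnalyticAt ℂ g0 0 := by
    apply analyticAt_const.mul
    apply AnalyticAt.cexp
    apply AnalyticAt.div _ analyticAt_const (by exact_mod_cast (by omega : n ≠ 0) : (n : ℂ) ≠ 0)
    apply AnalyticAt.clog ((hb 0).div analyticAt_const hb0)
    show b 0 0 / b 0 0 ∈ Complex.slitPlane
    rw [div_self hb0]
    exact Complex.one_mem_slitPlane
  have hg00 : g0 0 = c := by
    simp [hg0_def, div_self hb0, Complex.log_one]
  have hg0ne : g0 0 ≠ 0 := by rw [hg00]; exact hcne
  -- eventually (g0 z)^n = b 0 z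
  have hb0ev : ∀ᶠ z in nhds (0 : ℂ), b 0 z ≠ 0 := (hb 0).continuousAt.eventually_ne hb0
  have hroot : ∀ᶠ z in nhds (0 : ℂ), g0 z ^ n = b 0 z := by
    filter_upwards [hb0ev] with z hz
    have hw : b 0 z / b 0 0 ≠ 0 := div_ne_zero hz hb0
    rw [hg0_def]
    simp only [mul_pow, ← Complex.exp_nat_mul]
    rw [mul_div_cancel₀ _ (by exact_mod_cast (by omega : n ≠ 0) : (n : ℂ) ≠ 0)]
    rw [Complex.exp_log hw, hc]
    rw [hb_def]
    simp only [zero_add]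
    rw [mul_comm, div_mul_cancel₀]
    simpa [hb_def] using hb0
  have hg0nev : ∀ᶠ z in nhds (0 : ℂ), g0 z ≠ 0 := hg0an.continuousAt.eventually_ne hg0ne
  -- the root coefficients
  set s : ℕ → ℂ → ℂ := sAux n b g0 with hs_def
  have hs0 : s 0 = g0 := by rw [hs_def, sAux]
  have hsrec : ∀ k z, s (k + 1) z =
      (b (k + 1) z - PowerSeries.coeff (k + 1)
        ((PowerSeries.mk fun i => if h : i ≤ k then s i z else 0) ^ n))
      / ((n : ℂ) * g0 z ^ (n - 1)) := by
    intro k z; rw [hs_def]; rw [sAux]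
  -- analyticity of the s k
  have hsan : ∀ k, AnalyticAt ℂ (s k) 0 := by
    intro k
    induction k using Nat.strong_induction_on with
    | _ k ih =>
      match k with
      | 0 => rw [hs0]; exact hg0an
      | k + 1 =>
        have heq : s (k + 1) = fun z =>
            (b (k + 1) z - PowerSeries.coeff (k + 1)
              ((PowerSeries.mk fun i => (fun i z => if i ≤ k then s i z else 0) i z) ^ n))
            / ((n : ℂ) * g0 z ^ (n - 1)) := by
          funext z; rw [hsrec k z]
          congr 2
        rw [heq]
        apply AnalyticAt.div
        · apply (hb (k + 1)).sub
          apply aux_coeff_pow_analytic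
          intro i
          by_cases h : i ≤ k
          · exact (ih i (by omega)).congr
              (Filter.Eventually.of_forall fun w => (if_pos h).symm)
          · exact analyticAt_const.congr
              (Filter.Eventually.of_forall fun w => (if_neg h).symm)
        · exact analyticAt_const.mul (hg0an.pow _)
        · show (n : ℂ) * g0 0 ^ (n - 1) ≠ 0
          rw [hg00]
          exact mul_ne_zero (by exact_mod_cast (by omega : n ≠ 0)) (pow_ne_zero _ hcne)
  -- the main coefficientwise identity for the series S_z = Σ s_i t^i
  have hcoeff : ∀ m : ℕ, ∀ᶠ z in nhds (0 : ℂ),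
      PowerSeries.coeff m ((PowerSeries.mk fun i => s i z) ^ n) = b m z := by
    intro m
    match m with
    | 0 =>
      filter_upwards [hroot] with z hz
      rw [PowerSeries.coeff_zero_eq_constantCoeff, map_pow]
      simpa [hs0] using hz
    | k + 1 =>
      filter_upwards [hg0nev] with z hz
      set T : ℂ⟦X⟧ := PowerSeries.mk fun i => if h : i ≤ k then s i z else 0 with hT_def
      set U : ℂ⟦X⟧ := PowerSeries.mk fun i => if h : i ≤ k + 1 then s i z else 0 with hU_def
      have hSU : PowerSeries.coeff (k + 1) ((PowerSeries.mk fun i => s i z) ^ n)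
          = PowerSeries.coeff (k + 1) (U ^ n) := by
        refine aux_coeff_pow_congr (k + 1) (fun i hi => ?_) n (k + 1) le_rfl
        simp only [hU_def, PowerSeries.coeff_mk]
        exact (if_pos hi).symm
      have hUT : U = T + PowerSeries.C (s (k + 1) z) * X ^ (k + 1) := by
        ext i
        rw [hU_def, hT_def]
        simp only [PowerSeries.coeff_mk, map_add, PowerSeries.coeff_C_mul,
          PowerSeries.coeff_X_pow]
        rcases lt_trichotomy i (k + 1) with h | h | h
        · rw [dif_pos (by omega), dif_pos (by omega), if_neg (by omega)]; ring
        · subst h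
          rw [dif_pos le_rfl, dif_neg (by omega), if_pos rfl]; ring
        · rw [dif_neg (by omega), dif_neg (by omega), if_neg (by omega)]; ring
      have hcT : PowerSeries.constantCoeff T = g0 z := by
        rw [hT_def]
        have : PowerSeries.constantCoeff (PowerSeries.mk fun i => if h : i ≤ k then s i z else 0)
            = if h : (0 : ℕ) ≤ k then s 0 z else 0 := by
          rw [← PowerSeries.coeff_zero_eq_constantCoeff, PowerSeries.coeff_mk]
        rw [this, dif_pos (Nat.zero_le k), hs0]
      rw [hSU, hUT, aux_coeff_add_pow T (s (k + 1) z) k n hn, hcT, hsrec k z]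
      rw [← hT_def]
      have hden : (n : ℂ) * g0 z ^ (n - 1) ≠ 0 :=
        mul_ne_zero (by exact_mod_cast (by omega : n ≠ 0)) (pow_ne_zero _ hz)
      field_simp
      rw [mul_div_cancel_left₀ _ (by exact_mod_cast (by omega : n ≠ 0) : (n : ℂ) ≠ 0)]; ring
  -- conclude
  refine ⟨fun i z => s (i - 1) z, fun i _ => hsan (i - 1), ?_, ?_⟩
  · simpa [hs0, hg00] using hcne
  · intro k
    filter_upwards [hcoeff (k - n)] with z hz
    have hXS : (PowerSeries.mk fun i => if i = 0 then 0 else s (i - 1) z)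
        = X * PowerSeries.mk fun i => s i z := by
      ext i
      cases i with
      | zero => simp [PowerSeries.coeff_mk]
      | succ i =>
        rw [PowerSeries.coeff_succ_X_mul, PowerSeries.coeff_mk, PowerSeries.coeff_mk]
        simp
    rw [hXS, mul_pow, PowerSeries.coeff_X_pow_mul']
    by_cases h : n ≤ k
    · rw [if_pos h, if_neg (by omega), hz, hb_def]
      simp only [Nat.sub_add_cancel h]
    · rw [if_neg h, if_pos (by omega)]
end
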